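/- For x > 2 and any α ∈ [0,1], the sum of integrals ∫_0^{α+log_x 2 - 1} x^{δ+1} dδ + ∫_{α+log_x 2 - 1}^{α} (2x^α - x^δ) dδ + ∫_α^1 x^δ dδ equals x^α · (2 - 2·log_x 2 + 2/(x·ln x)); in particular, this value is independent of α. -/

import Mathlib

open intervalIntegral

lemma integral_const_rpow_exp {x : ℝ} (hx : 1 < x) (a b : ℝ) :
    ∫ δ in a..b, x ^ δ = (x ^ b - x ^ a) / Real.log x := by
  have hx0 : 0 < x := by linarith
  have hl : Real.log x ≠ 0 := ne_of_gt (Real.log_pos hx)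
  have h1 : ∀ δ : ℝ, x ^ δ = Real.exp (Real.log x * δ) := by
    intro δ
    rw [Real.rpow_def_of_pos hx0, mul_comm]
  simp_rw [h1]
  rw [integral_comp_mul_left (fun t => Real.exp t) hl, integral_exp]
  field_simp
  rw [smul_eq_mul, ← mul_assoc, mul_one_div_cancel hl, one_mul]

lemma rpow_intervalIntegrable {x : ℝ} (hx : 0 < x) (a b : ℝ) :
    IntervalIntegrable (fun δ : ℝ => x ^ δ) MeasureTheory.volume a b :=
  by
  have : (fun δ : ℝ => x ^ δ) = fun δ => Real.exp (Real.log x * δ) := by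
    funext δ; rw [Real.rpow_def_of_pos hx, mul_comm]
  rw [this]
  exact (Real.continuous_exp.comp (continuous_const.mul continuous_id)).intervalIntegrable a b

/-- Case 1 integral identity in the analysis of the randomized geometric guessing
algorithm for online sequence partitioning with `p = 2`. -/
theorem integral_identity_case_one (x : ℝ) (hx : 2 < x) (α : ℝ) (hα : α ∈ Set.Icc (0:ℝ) 1) :
    (∫ δ in (0:ℝ)..(α + Real.logb x 2 - 1), x ^ (δ + 1)) +
    (∫ δ in (α + Real.logb x 2 - 1)..α, (2 * x ^ α - x ^ δ)) +
    (∫ δ in α..(1:ℝ), x ^ δ) =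
    x ^ α * (2 - 2 * Real.logb x 2 + 2 / (x * Real.log x)) := by
  have hx1 : (1:ℝ) < x := by linarith
  have hx0 : (0:ℝ) < x := by linarith
  have hl : (0:ℝ) < Real.log x := Real.log_pos hx1
  set L := Real.logb x 2 with hL
  set A := α + L - 1 with hA
  have h1 : (∫ δ in (0:ℝ)..A, x ^ (δ + 1)) = ∫ δ in ((0:ℝ)+1)..(A+1), x ^ δ := by
    exact integral_comp_add_right (fun δ => x ^ δ) 1
  have hI2 : (∫ δ in A..α, (2 * x ^ α - x ^ δ))
      = (A - α) • (0:ℝ) + ((2 * x ^ α) * (α - A) - (x ^ α - x ^ A) / Real.log x) := by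
    rw [integral_sub (intervalIntegrable_const) (rpow_intervalIntegrable hx0 A α),
      integral_const, integral_const_rpow_exp hx1]
    simp [smul_eq_mul]
    ring
  have hxL : x ^ L = 2 := Real.rpow_logb hx0 (ne_of_gt hx1) (by norm_num)
  have hxA : x ^ A = 2 * x ^ α / x := by
    rw [hA, show α + L - 1 = α + L + (-1) by ring, Real.rpow_add hx0, Real.rpow_add hx0,
      hxL, Real.rpow_neg_one]
    field_simp
  have hxA1 : x ^ (A + 1) = 2 * x ^ α := by
    rw [show A + 1 = α + L by rw [hA]; ring, Real.rpow_add hx0, hxL]; ring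
  rw [h1, integral_const_rpow_exp hx1, integral_const_rpow_exp hx1, hI2, hxA1, hxA]
  have hln : Real.log x ≠ 0 := ne_of_gt hl
  have hx0' : x ≠ 0 := ne_of_gt hx0
  rw [Real.rpow_one, zero_add, Real.rpow_one]
  field_simp
  ring
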